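/- Under the rank-one local factor model, if all loadings b_k for k ∈ G are strictly positive and Σ_u is diagonal positive definite, then all off-diagonal entries of (Σ_u + σ_g² b bᵀ)^{-1} restricted to indices in G are strictly negative. -/

import Mathlib

open Matrix Finset

/-- Under the rank-one local factor model with strictly positive loadings on the group `G`
and a diagonal positive definite idiosyncratic covariance, all off-diagonal entries of
`(Su + σg² b bᵀ)⁻¹` restricted to indices in `G` are strictly negative. -/
theorem rank_one_inverse_offdiag_neg
    (p : ℕ) (Su : Matrix (Fin p) (Fin p) ℝ)
    (hdiag : ∀ k l : Fin p, k ≠ l → Su k l = 0)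
    (hpos : ∀ k : Fin p, 0 < Su k k)
    (b : Fin p → ℝ) (G : Finset (Fin p))
    (hbG : ∀ k ∈ G, 0 < b k)
    (hb : ∀ k : Fin p, k ∉ G → b k = 0)
    (σg : ℝ) (hσ : 0 < σg) :
    ∀ i ∈ G, ∀ j ∈ G, i ≠ j →
      (Su + σg ^ 2 • Matrix.vecMulVec b b)⁻¹ i j < 0 := by
  have hd : ∀ k : Fin p, Su k k ≠ 0 := fun k => (hpos k).ne'
  set S : ℝ := ∑ k, b k ^ 2 / Su k k with hSdef
  have hSnn : 0 ≤ S := Finset.sum_nonneg fun k _ =>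
    div_nonneg (sq_nonneg _) (hpos k).le
  have hden : 0 < 1 + σg ^ 2 * S := by positivity
  set c : ℝ := σg ^ 2 / (1 + σg ^ 2 * S) with hcdef
  have hc : 0 < c := by positivity
  have hkey : σg ^ 2 - c - σg ^ 2 * c * S = 0 := by
    rw [hcdef]; field_simp; ring
  clear_value S c
  set B : Matrix (Fin p) (Fin p) ℝ := Matrix.of fun i j =>
    (if i = j then 1 / Su i i else 0) - c * (b i / Su i i) * (b j / Su j j) with hBdef
  have hmul : (Su + σg ^ 2 • Matrix.vecMulVec b b) * B = 1 := by
    ext i j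
    have h1 : ∑ k, Su i k * B k j = Su i i * B i j := by
      refine Finset.sum_eq_single i (fun k _ hk => ?_) (fun h => absurd (Finset.mem_univ i) h)
      rw [hdiag i k (Ne.symm hk), zero_mul]
    have h2 : ∑ k, b k * B k j
        = b j / Su j j - c * S * (b j / Su j j) := by
      have : ∀ k, b k * B k j
          = (if k = j then b k / Su k k else 0) - c * (b k ^ 2 / Su k k) * (b j / Su j j) := by
        intro k
        simp only [hBdef, Matrix.of_apply]
        split_ifs with h <;> ring
      rw [Finset.sum_congr rfl fun k _ => this k, Finset.sum_sub_distrib]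
      rw [Finset.sum_ite_eq' Finset.univ j (fun k => b k / Su k k)]
      simp only [Finset.mem_univ, if_true]
      rw [← Finset.sum_mul, ← Finset.mul_sum, ← hSdef]
      try ring
    simp only [Matrix.mul_apply, Matrix.add_apply, Matrix.smul_apply, Matrix.vecMulVec_apply,
      Matrix.one_apply, smul_eq_mul]
    have expand : ∀ k, (Su i k + σg ^ 2 * (b i * b k)) * B k j
        = Su i k * B k j + σg ^ 2 * b i * (b k * B k j) := by intro k; ring
    rw [Finset.sum_congr rfl fun k _ => expand k, Finset.sum_add_distrib,
      ← Finset.mul_sum, h1, h2]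
    simp only [hBdef, Matrix.of_apply]
    by_cases hij : i = j
    · subst hij
      simp only [if_pos rfl, if_true, eq_self_iff_true]
      have hdi := hd i
      field_simp
      linear_combination b i ^ 2 * hkey
    · simp only [if_neg hij]
      have hdi := hd i; have hdj := hd j
      field_simp
      linear_combination b i * b j * hkey
  have hinv : (Su + σg ^ 2 • Matrix.vecMulVec b b)⁻¹ = B := Matrix.inv_eq_right_inv hmul
  intro i hi j hj hij
  rw [hinv]
  simp only [hBdef, Matrix.of_apply, if_neg hij, zero_sub]
  have : 0 < c * (b i / Su i i) * (b j / Su j j) := by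
    have := hbG i hi; have := hbG j hj; have := hpos i; have := hpos j
    positivity
  linarith
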